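/- Let L ≥ 1 and M ≥ 0, set K = L + M, and let s, c : Fin K → ℝ with s k = σ for every index k < L (a constant σ ∈ ℝ on the first block). Define s̃, c̃ : Fin (1 + M) → ℝ by s̃ 0 = σ, s̃ (j+1) = s (L+j), c̃ 0 = √(∑_{k < L} (c k)^2), and c̃ (j+1) = c (L+j). Then the infimum of F_{s,c}(x) = (1/2) ∑ k, s k * (x k)^2 + ∑ k, c k * x k over {x : Fin K → ℝ, ∑ k, (x k)^2 = 1} equals the infimum of F_{s̃,c̃}(z) = (1/2) ∑ j, s̃ j * (z j)^2 + ∑ j, c̃ j * z j over {z : Fin (1+M) → ℝ, ∑ j, (z j)^2 = 1}. -/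

import Mathlib

set_option maxRecDepth 4000

lemma scqp_sphere_nonempty {n : ℕ} (hn : 0 < n) : ∃ x : Fin n → ℝ, ∑ k, x k ^ 2 = 1 := by
  refine ⟨fun k => if k = ⟨0, hn⟩ then 1 else 0, ?_⟩
  simp [apply_ite (· ^ 2), Finset.sum_ite_eq']

lemma scqp_bddBelow {n : ℕ} (s c : Fin n → ℝ) :
    BddBelow ((fun x : Fin n → ℝ =>
        (1 / 2 : ℝ) * ∑ k, s k * (x k) ^ 2 + ∑ k, c k * x k) ''
          {x | ∑ k, (x k) ^ 2 = 1}) := by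
  refine ⟨(1 / 2 : ℝ) * ∑ k, -|s k| + ∑ k, -|c k|, ?_⟩
  rintro y ⟨x, hx, rfl⟩
  have hsq : ∀ k, x k ^ 2 ≤ 1 := by
    intro k
    have := Finset.single_le_sum (f := fun k => x k ^ 2)
      (fun i _ => sq_nonneg _) (Finset.mem_univ k)
    rw [hx] at this
    exact this
  have habs : ∀ k, |x k| ≤ 1 := fun k => (sq_le_one_iff_abs_le_one _).1 (hsq k)
  have h1 : ∀ k, -|s k| ≤ s k * x k ^ 2 := by
    intro k
    have : |s k * x k ^ 2| ≤ |s k| := by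
      rw [abs_mul, abs_of_nonneg (sq_nonneg (x k))]
      calc |s k| * x k ^ 2 ≤ |s k| * 1 := by
            exact mul_le_mul_of_nonneg_left (hsq k) (abs_nonneg _)
        _ = |s k| := mul_one _
    linarith [neg_abs_le (s k * x k ^ 2)]
  have h2 : ∀ k, -|c k| ≤ c k * x k := by
    intro k
    have : |c k * x k| ≤ |c k| := by
      rw [abs_mul]
      calc |c k| * |x k| ≤ |c k| * 1 :=
            mul_le_mul_of_nonneg_left (habs k) (abs_nonneg _)
        _ = |c k| := mul_one _
    linarith [neg_abs_le (c k * x k)]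
  have hs1 : ∑ k, -|s k| ≤ ∑ k, s k * x k ^ 2 := Finset.sum_le_sum fun k _ => h1 k
  have hs2 : ∑ k, -|c k| ≤ ∑ k, c k * x k := Finset.sum_le_sum fun k _ => h2 k
  simp only
  linarith

lemma scqp_block_choice (L : ℕ) (hL : 1 ≤ L) (cb : Fin L → ℝ) (z0 : ℝ) :
    ∃ u : Fin L → ℝ, ∑ i, u i ^ 2 = z0 ^ 2 ∧
      ∑ i, cb i * u i = Real.sqrt (∑ i, cb i ^ 2) * z0 := by
  set A := ∑ i, cb i ^ 2 with hA
  have hA0 : 0 ≤ A := Finset.sum_nonneg fun i _ => sq_nonneg _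
  by_cases h : A = 0
  · have hcb : ∀ i ∈ Finset.univ, cb i ^ 2 = 0 := by
      intro i hi
      exact (Finset.sum_eq_zero_iff_of_nonneg (fun i _ => sq_nonneg (cb i))).1 h i hi
    have hcb' : ∀ i : Fin L, cb i = 0 := fun i =>
      pow_eq_zero_iff (n := 2) (by norm_num) |>.1 (hcb i (Finset.mem_univ i))
    refine ⟨fun i => if i = ⟨0, hL⟩ then z0 else 0, ?_, ?_⟩
    · simp [apply_ite (· ^ 2), Finset.sum_ite_eq']
    · simp [hcb', h]
  · have hApos : 0 < A := lt_of_le_of_ne hA0 (Ne.symm h)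
    have hsq : Real.sqrt A ^ 2 = A := Real.sq_sqrt hA0
    have hsne : Real.sqrt A ≠ 0 := by positivity
    refine ⟨fun i => z0 * cb i / Real.sqrt A, ?_, ?_⟩
    · have : ∀ i : Fin L, (z0 * cb i / Real.sqrt A) ^ 2 = z0 ^ 2 / A * cb i ^ 2 := by
        intro i
        field_simp
        rw [hsq]
      rw [Finset.sum_congr rfl fun i _ => this i, ← Finset.mul_sum, ← hA]
      field_simp
    · have : ∀ i : Fin L, cb i * (z0 * cb i / Real.sqrt A) = z0 / Real.sqrt A * cb i ^ 2 := by
        intro i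
        field_simp
      rw [Finset.sum_congr rfl fun i _ => this i, ← Finset.mul_sum, ← hA]
      rw [div_mul_eq_mul_div, div_eq_iff hsne]
      have h2 : Real.sqrt A * Real.sqrt A = A := Real.mul_self_sqrt hA0
      linear_combination -z0 * h2

/-- Block-merging step of Lemma 1 of the paper: if the first `L` eigenvalues of an
SCQP coincide (all equal to `σ`), they can be collapsed to a single coordinate, with
the corresponding linear coefficient replaced by the Euclidean norm of the first `L`
coefficients, without changing the optimal value over the unit sphere. -/
theorem scqp_merge_repeated_eigenvalues (L M : ℕ) (hL : 1 ≤ L)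
    (s c : Fin (L + M) → ℝ) (σ : ℝ)
    (hconst : ∀ k : Fin (L + M), (k : ℕ) < L → s k = σ)
    (stilde ctilde : Fin (1 + M) → ℝ)
    (hst0 : stilde ⟨0, by omega⟩ = σ)
    (hstj : ∀ j : Fin M, stilde ⟨1 + j.1, by have := j.isLt; omega⟩
        = s ⟨L + j.1, by have := j.isLt; omega⟩)
    (hct0 : ctilde ⟨0, by omega⟩
        = Real.sqrt (∑ k ∈ Finset.univ.filter (fun k : Fin (L + M) => (k : ℕ) < L),
            (c k) ^ 2))
    (hctj : ∀ j : Fin M, ctilde ⟨1 + j.1, by have := j.isLt; omega⟩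
        = c ⟨L + j.1, by have := j.isLt; omega⟩) :
    sInf ((fun x : Fin (L + M) → ℝ =>
        (1 / 2 : ℝ) * ∑ k, s k * (x k) ^ 2 + ∑ k, c k * x k) ''
          {x | ∑ k, (x k) ^ 2 = 1})
      = sInf ((fun z : Fin (1 + M) → ℝ =>
        (1 / 2 : ℝ) * ∑ j, stilde j * (z j) ^ 2 + ∑ j, ctilde j * z j) ''
          {z | ∑ j, (z j) ^ 2 = 1}) := by
  -- notation
  set f : (Fin (L + M) → ℝ) → ℝ := fun x =>
    (1 / 2 : ℝ) * ∑ k, s k * (x k) ^ 2 + ∑ k, c k * x k with hf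
  set g : (Fin (1 + M) → ℝ) → ℝ := fun z =>
    (1 / 2 : ℝ) * ∑ j, stilde j * (z j) ^ 2 + ∑ j, ctilde j * z j with hg
  -- the filtered sum equals the sum over the first block
  have hfilter : ∑ k ∈ Finset.univ.filter (fun k : Fin (L + M) => (k : ℕ) < L), (c k) ^ 2
      = ∑ i : Fin L, c (Fin.castAdd M i) ^ 2 := by
    rw [Finset.sum_filter, Fin.sum_univ_add]
    have h1 : ∀ i : Fin L, ((Fin.castAdd M i : Fin (L + M)) : ℕ) < L := fun i => i.isLt
    have h2 : ∀ j : Fin M, ¬ ((Fin.natAdd L j : Fin (L + M)) : ℕ) < L := by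
      intro j
      simp [Fin.natAdd]
    simp [h1, h2]
  set A : ℝ := ∑ i : Fin L, c (Fin.castAdd M i) ^ 2 with hAdef
  have hA0 : 0 ≤ A := Finset.sum_nonneg fun i _ => sq_nonneg _
  have hct0' : ctilde ⟨0, by omega⟩ = Real.sqrt A := by rw [hct0, hfilter]
  -- index facts
  have hz0 : ∀ z : Fin (1 + M) → ℝ, ∀ i : Fin 1,
      z (Fin.castAdd M i) = z ⟨0, by omega⟩ := by
    intro z i
    congr 1
    ext
    simp [Fin.val_eq_zero]
  have hnat1 : ∀ (j : Fin M), (Fin.natAdd 1 j : Fin (1 + M))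
      = (⟨1 + j.1, by have := j.isLt; omega⟩ : Fin (1 + M)) := by
    intro j; rfl
  have hnatL : ∀ (j : Fin M), (Fin.natAdd L j : Fin (L + M))
      = (⟨L + j.1, by have := j.isLt; omega⟩ : Fin (L + M)) := by
    intro j; rfl
  -- key comparison 1 : from x on the big sphere, produce z with g z ≤ f x
  have dir1 : ∀ x : Fin (L + M) → ℝ, (∑ k, (x k) ^ 2 = 1) →
      ∃ z : Fin (1 + M) → ℝ, (∑ j, (z j) ^ 2 = 1) ∧ g z ≤ f x := by
    intro x hx
    set T : ℝ := ∑ i : Fin L, x (Fin.castAdd M i) ^ 2 with hT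
    have hT0 : 0 ≤ T := Finset.sum_nonneg fun i _ => sq_nonneg _
    set t : ℝ := Real.sqrt T with ht
    have ht2 : t ^ 2 = T := Real.sq_sqrt hT0
    refine ⟨Fin.append (fun _ : Fin 1 => -t) (fun j : Fin M => x (Fin.natAdd L j)), ?_, ?_⟩
    · rw [Fin.sum_univ_add]
      simp only [Fin.append_left, Fin.append_right]
      rw [Fin.sum_univ_add] at hx
      rw [← hT] at hx
      simp only [Fin.sum_univ_one, neg_sq, ht2]
      linarith [hx]
    · -- compute g and f
      have hCS : (∑ i : Fin L, c (Fin.castAdd M i) * x (Fin.castAdd M i)) ^ 2 ≤ A * T :=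
        Finset.sum_mul_sq_le_sq_mul_sq _ _ _
      have hlin : -(Real.sqrt A * t) ≤ ∑ i : Fin L, c (Fin.castAdd M i) * x (Fin.castAdd M i) := by
        have h1 : |∑ i : Fin L, c (Fin.castAdd M i) * x (Fin.castAdd M i)| ≤
            Real.sqrt (A * T) := Real.abs_le_sqrt hCS
        have h2 : Real.sqrt (A * T) = Real.sqrt A * t := by
          rw [ht, Real.sqrt_mul hA0]
        linarith [neg_abs_le (∑ i : Fin L, c (Fin.castAdd M i) * x (Fin.castAdd M i))]
      rw [hf, hg]
      simp only
      rw [Fin.sum_univ_add (f := fun k => s k * x k ^ 2),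
        Fin.sum_univ_add (f := fun k => c k * x k),
        Fin.sum_univ_add (f := fun j => stilde j *
          (Fin.append (fun _ : Fin 1 => -t) (fun j : Fin M => x (Fin.natAdd L j)) j) ^ 2),
        Fin.sum_univ_add (f := fun j => ctilde j *
          (Fin.append (fun _ : Fin 1 => -t) (fun j : Fin M => x (Fin.natAdd L j)) j))]
      simp only [Fin.append_left, Fin.append_right, Fin.sum_univ_one]
      have e1 : ∀ i : Fin 1, stilde (Fin.castAdd M i) = σ := by
        intro i; rw [hz0 stilde i] at *; exact hst0
      have e2 : ∀ i : Fin 1, ctilde (Fin.castAdd M i) = Real.sqrt A := by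
        intro i; rw [hz0 ctilde i]; exact hct0'
      have e3 : ∀ j : Fin M, stilde (Fin.natAdd 1 j) = s (Fin.natAdd L j) := by
        intro j; rw [hnat1 j, hnatL j, hstj j]
      have e4 : ∀ j : Fin M, ctilde (Fin.natAdd 1 j) = c (Fin.natAdd L j) := by
        intro j; rw [hnat1 j, hnatL j, hctj j]
      have e5 : ∀ i : Fin L, s (Fin.castAdd M i) = σ := fun i => hconst _ i.isLt
      rw [e1 0, e2 0]
      simp only [e3, e4]
      have hq : ∑ i : Fin L, s (Fin.castAdd M i) * x (Fin.castAdd M i) ^ 2 = σ * T := by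
        rw [hT, Finset.mul_sum]
        exact Finset.sum_congr rfl fun i _ => by rw [e5 i]
      rw [hq]
      have : σ * (-t) ^ 2 = σ * T := by rw [neg_sq, ht2]
      rw [this]
      have hlin' : Real.sqrt A * (-t) ≤
          ∑ i : Fin L, c (Fin.castAdd M i) * x (Fin.castAdd M i) := by
        rw [mul_neg]; exact hlin
      linarith
  -- key comparison 2 : from z on the small sphere, produce x with f x ≤ g z
  have dir2 : ∀ z : Fin (1 + M) → ℝ, (∑ j, (z j) ^ 2 = 1) →
      ∃ x : Fin (L + M) → ℝ, (∑ k, (x k) ^ 2 = 1) ∧ f x ≤ g z := by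
    intro z hz
    obtain ⟨u, hu1, hu2⟩ := scqp_block_choice L hL (fun i => c (Fin.castAdd M i))
      (z ⟨0, by omega⟩)
    refine ⟨Fin.append u (fun j : Fin M => z (Fin.natAdd 1 j)), ?_, ?_⟩
    · rw [Fin.sum_univ_add]
      simp only [Fin.append_left, Fin.append_right]
      rw [Fin.sum_univ_add] at hz
      simp only [Fin.sum_univ_one] at hz
      rw [hu1, ← hz, hz0 z 0]
    · rw [hf, hg]
      simp only
      rw [Fin.sum_univ_add (f := fun j => stilde j * (z j) ^ 2),
        Fin.sum_univ_add (f := fun j => ctilde j * z j),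
        Fin.sum_univ_add (f := fun k => s k *
          (Fin.append u (fun j : Fin M => z (Fin.natAdd 1 j)) k) ^ 2),
        Fin.sum_univ_add (f := fun k => c k *
          (Fin.append u (fun j : Fin M => z (Fin.natAdd 1 j)) k))]
      simp only [Fin.append_left, Fin.append_right, Fin.sum_univ_one]
      have e1 : stilde (Fin.castAdd M (0 : Fin 1)) = σ := by
        rw [hz0 stilde 0]; exact hst0
      have e2 : ctilde (Fin.castAdd M (0 : Fin 1)) = Real.sqrt A := by
        rw [hz0 ctilde 0]; exact hct0'
      have e3 : ∀ j : Fin M, stilde (Fin.natAdd 1 j) = s (Fin.natAdd L j) := by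
        intro j; rw [hnat1 j, hnatL j, hstj j]
      have e4 : ∀ j : Fin M, ctilde (Fin.natAdd 1 j) = c (Fin.natAdd L j) := by
        intro j; rw [hnat1 j, hnatL j, hctj j]
      have e5 : ∀ i : Fin L, s (Fin.castAdd M i) = σ := fun i => hconst _ i.isLt
      rw [e1, e2]
      simp only [e3, e4]
      have hq : ∑ i : Fin L, s (Fin.castAdd M i) * u i ^ 2
          = σ * (z ⟨0, by omega⟩) ^ 2 := by
        rw [← hu1, Finset.mul_sum]
        exact Finset.sum_congr rfl fun i _ => by rw [e5 i]
      have hl : ∑ i : Fin L, c (Fin.castAdd M i) * u i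
          = Real.sqrt A * z ⟨0, by omega⟩ := hu2
      rw [hq, hl, hz0 z 0]
  -- nonemptiness and boundedness
  obtain ⟨x0, hx0⟩ := scqp_sphere_nonempty (n := L + M) (by omega)
  obtain ⟨z0, hz0'⟩ := scqp_sphere_nonempty (n := 1 + M) (by omega)
  have hSne : (f '' {x | ∑ k, (x k) ^ 2 = 1}).Nonempty := ⟨f x0, ⟨x0, hx0, rfl⟩⟩
  have hTne : (g '' {z | ∑ j, (z j) ^ 2 = 1}).Nonempty := ⟨g z0, ⟨z0, hz0', rfl⟩⟩
  have hSbdd : BddBelow (f '' {x | ∑ k, (x k) ^ 2 = 1}) := scqp_bddBelow s c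
  have hTbdd : BddBelow (g '' {z | ∑ j, (z j) ^ 2 = 1}) := scqp_bddBelow stilde ctilde
  apply le_antisymm
  · apply le_csInf hTne
    rintro y ⟨z, hzmem, rfl⟩
    obtain ⟨x, hxmem, hle⟩ := dir2 z hzmem
    exact le_trans (csInf_le hSbdd ⟨x, hxmem, rfl⟩) hle
  · apply le_csInf hSne
    rintro y ⟨x, hxmem, rfl⟩
    obtain ⟨z, hzmem, hle⟩ := dir1 x hxmem
    exact le_trans (csInf_le hTbdd ⟨z, hzmem, rfl⟩) hle
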